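/- arXiv:1811.07734 — 7 statements merged into one kernel-verified Lean document; each statement's English description precedes it below -/
import Mathlib

section
/- Let S be a nonempty compact subset of E = EuclideanSpace ℝ (Fin d). Then for every set A ⊆ E, A ⊆ 𝔤_S(A). -/
open Set Pointwise

noncomputable section

/-- The Voronoi cell of `c` with respect to the set `S`. -/
def vorCell {d : ℕ} (S : Set (EuclideanSpace ℝ (Fin d))) (c : EuclideanSpace ℝ (Fin d)) :
    Set (EuclideanSpace ℝ (Fin d)) :=
  {x | ∀ c' ∈ S, ‖x - c‖ ≤ ‖x - c'‖}

/-- `Q` is G-invariant with respect to `S`. -/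
def GInvariant {d : ℕ} (S Q : Set (EuclideanSpace ℝ (Fin d))) : Prop :=
  ∀ x ∈ convexHull ℝ S, ∀ e ∈ Q, ∀ c ∈ S, e + x ∈ vorCell S c → e + x - c ∈ Q

/-- `Q` is G-invariant with respect to the collection `𝕊`. -/
def GInvariantColl {d : ℕ} (𝕊 : Set (Set (EuclideanSpace ℝ (Fin d))))
    (Q : Set (EuclideanSpace ℝ (Fin d))) : Prop :=
  ∀ S ∈ 𝕊, GInvariant S Q

/-- The set operator 𝔤_S. -/
def gOp {d : ℕ} (S A : Set (EuclideanSpace ℝ (Fin d))) : Set (EuclideanSpace ℝ (Fin d)) :=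
  ⋃ c ∈ S, (fun v => v - c) '' ((convexHull ℝ S + A) ∩ vorCell S c)

/-- The set operator 𝔤_𝕊. -/
def gOpColl {d : ℕ} (𝕊 : Set (Set (EuclideanSpace ℝ (Fin d))))
    (A : Set (EuclideanSpace ℝ (Fin d))) : Set (EuclideanSpace ℝ (Fin d)) :=
  ⋃ S ∈ 𝕊, gOp S A

/-- Iterates of 𝔤_𝕊. -/
def gIter {d : ℕ} (𝕊 : Set (Set (EuclideanSpace ℝ (Fin d))))
    (A : Set (EuclideanSpace ℝ (Fin d))) : ℕ → Set (EuclideanSpace ℝ (Fin d))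
  | 0 => A
  | n + 1 => gOpColl 𝕊 (gIter 𝕊 A n)

/-- Iterates of 𝔤_S for a single set S. -/
def gIterS {d : ℕ} (S A : Set (EuclideanSpace ℝ (Fin d))) :
    ℕ → Set (EuclideanSpace ℝ (Fin d))
  | 0 => A
  | n + 1 => gOp S (gIterS S A n)

/-- `D` is F-invariant with respect to `S`. -/
def FInvariant {d : ℕ} (S D : Set (EuclideanSpace ℝ (Fin d))) : Prop :=
  ∀ z ∈ D, ∀ c ∈ S, z ∈ vorCell S c → ∀ x ∈ convexHull ℝ S, z + x - c ∈ D

/-- `D` is F-invariant with respect to the collection `𝕊`. -/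
def FInvariantColl {d : ℕ} (𝕊 : Set (Set (EuclideanSpace ℝ (Fin d))))
    (D : Set (EuclideanSpace ℝ (Fin d))) : Prop :=
  ∀ S ∈ 𝕊, FInvariant S D

/-- The set operator 𝔭_S. -/
def pOp {d : ℕ} (S D : Set (EuclideanSpace ℝ (Fin d))) : Set (EuclideanSpace ℝ (Fin d)) :=
  convexHull ℝ S + ⋃ c ∈ S, (fun v => v - c) '' (D ∩ vorCell S c)

/-- The set operator 𝔭_𝕊. -/
def pOpColl {d : ℕ} (𝕊 : Set (Set (EuclideanSpace ℝ (Fin d))))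
    (D : Set (EuclideanSpace ℝ (Fin d))) : Set (EuclideanSpace ℝ (Fin d)) :=
  ⋃ S ∈ 𝕊, pOp S D

/-- Iterates of 𝔭_𝕊. -/
def pIter {d : ℕ} (𝕊 : Set (Set (EuclideanSpace ℝ (Fin d))))
    (D : Set (EuclideanSpace ℝ (Fin d))) : ℕ → Set (EuclideanSpace ℝ (Fin d))
  | 0 => D
  | n + 1 => pOpColl 𝕊 (pIter 𝕊 D n)

/-- The convexified set operator 𝔊_𝕊. -/
def GOpColl {d : ℕ} (𝕊 : Set (Set (EuclideanSpace ℝ (Fin d))))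
    (A : Set (EuclideanSpace ℝ (Fin d))) : Set (EuclideanSpace ℝ (Fin d)) :=
  ⋃ S ∈ 𝕊, convexHull ℝ (gOp S A)

/-- Iterates of the convexified operator 𝔊_𝕊. -/
def GIter {d : ℕ} (𝕊 : Set (Set (EuclideanSpace ℝ (Fin d))))
    (Q : Set (EuclideanSpace ℝ (Fin d))) : ℕ → Set (EuclideanSpace ℝ (Fin d))
  | 0 => convexHull ℝ Q
  | n + 1 => GOpColl 𝕊 (GIter 𝕊 Q n)


theorem stmt1 {d : ℕ} (S : Set (EuclideanSpace ℝ (Fin d)))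
    (hS : S.Nonempty) (hSc : IsCompact S) :
    ∀ A : Set (EuclideanSpace ℝ (Fin d)), A ⊆ gOp S A := by
  intro A a ha
  obtain ⟨c, hcS, hmax⟩ := hSc.exists_isMaxOn hS
    (show ContinuousOn (fun x => (inner ℝ a x : ℝ)) S from
      (continuous_const.inner continuous_id).continuousOn)
  refine mem_iUnion₂.mpr ⟨c, hcS, ⟨a + c, ⟨?_, ?_⟩, add_sub_cancel_right a c⟩⟩
  · have := Set.add_mem_add (subset_convexHull ℝ S hcS) ha
    rwa [add_comm c a] at this
  · intro c' hc'
    have h1 : (0:ℝ) ≤ @inner ℝ _ _ a (c - c') := by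
      rw [inner_sub_right]; exact sub_nonneg.mpr (hmax hc')
    have key : ‖a + c - c‖^2 ≤ ‖a + c - c'‖^2 := by
      have e1 : a + c - c = a := by abel
      have e2 : a + c - c' = a + (c - c') := by abel
      rw [e1, e2, @norm_add_sq_real]
      nlinarith [sq_nonneg ‖c - c'‖]
    exact (pow_le_pow_iff_left₀ (norm_nonneg _) (norm_nonneg _) two_ne_zero).mp key
end
end

section
/- Let S be a nonempty compact subset of E = EuclideanSpace ℝ (Fin d) and A ⊆ E. Then A is G-invariant with respect to S if and only if A = 𝔤_S(A). -/
open Set Pointwise RealInnerProductSpace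

noncomputable section

theorem stmt2 {d : ℕ} (S : Set (EuclideanSpace ℝ (Fin d)))
    (hS : S.Nonempty) (hSc : IsCompact S) (A : Set (EuclideanSpace ℝ (Fin d))) :
    GInvariant S A ↔ A = gOp S A := by
  constructor
  · intro hG
    apply Set.Subset.antisymm
    · intro e he
      obtain ⟨c, hcS, hmax⟩ := hSc.exists_isMaxOn hS ((innerSL ℝ e).continuous.continuousOn)
      refine Set.mem_iUnion₂.mpr ⟨c, hcS, ⟨e + c, ⟨?_, ?_⟩, add_sub_cancel_right e c⟩⟩
      · rw [show e + c = c + e from add_comm e c]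
        exact Set.add_mem_add (subset_convexHull ℝ S hcS) he
      · intro c' hc'
        have hmax' : (inner ℝ e c' : ℝ) ≤ inner ℝ e c := hmax hc'
        have hkey : ‖e‖ ^ 2 ≤ ‖e + (c - c')‖ ^ 2 := by
          rw [norm_add_sq_real, inner_sub_right]
          nlinarith [sq_nonneg ‖c - c'‖]
        have h2 : ‖e‖ ≤ ‖e + (c - c')‖ := by
          calc ‖e‖ = Real.sqrt (‖e‖ ^ 2) := (Real.sqrt_sq (norm_nonneg e)).symm
            _ ≤ Real.sqrt (‖e + (c - c')‖ ^ 2) := Real.sqrt_le_sqrt hkey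
            _ = _ := Real.sqrt_sq (norm_nonneg _)
        have : e + c - c = e := by abel
        rw [this]
        have : e + c - c' = e + (c - c') := by abel
        rw [this]
        exact h2
    · intro y hy
      obtain ⟨c, hcS, v, ⟨hv1, hv2⟩, hvy⟩ := Set.mem_iUnion₂.mp hy
      obtain ⟨x, hx, a, ha, hxa⟩ := Set.mem_add.mp hv1
      subst hvy
      have hv : a + x ∈ vorCell S c := by rwa [add_comm, hxa]
      have h := hG x hx a ha c hcS hv
      have h3 : a + x - c = v - c := by rw [← hxa]; abel
      show v - c ∈ A
      exact h3 ▸ h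
  · intro h x hx e he c hcS hvor
    rw [h]
    refine Set.mem_iUnion₂.mpr ⟨c, hcS, ⟨e + x, ⟨?_, hvor⟩, rfl⟩⟩
    rw [show e + x = x + e from add_comm e x]
    exact Set.add_mem_add hx he
end
end

section
/- Let 𝕊 be a collection of nonempty compact subsets of E = EuclideanSpace ℝ (Fin d). For S ∈ 𝕊, let cor(S) := S ∩ (frontier of the convex hull of S) (the corner points) and inn(S) := S \ (frontier of the convex hull of S) (the inner points), and assume cor(S) is nonempty. Let Q ⊆ E be a set such that for every S ∈ 𝕊: (a) 𝔤_{cor(S)}(Q) ⊆ Q, where 𝔤_{cor(S)} is the set operator formed with the convex hull and Voronoi cells of cor(S); and (b) for every c ∈ inn(S), (((convex hull of S) + Q) ∩ V_S(c)) − c ⊆ Q. Then Q is G-invariant with respect to 𝕊; consequently, if in addition 0 ∈ Q, then 𝔤^∞_𝕊({0}) ⊆ Q, so if Q is bounded then the minimal G-invariant set with respect to 𝕊 containing the origin is bounded. -/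
open Set Pointwise

noncomputable section

lemma myIsCompact_convexHull {d : ℕ} {s : Set (EuclideanSpace ℝ (Fin d))}
    (hs : IsCompact s) : IsCompact (convexHull ℝ s) := by
  classical
  rcases s.eq_empty_or_nonempty with rfl | ⟨s₀, hs₀⟩
  · simp
  set f : (Fin (d+1) → ℝ) × (Fin (d+1) → EuclideanSpace ℝ (Fin d)) → EuclideanSpace ℝ (Fin d) :=
    fun wp => ∑ i, wp.1 i • wp.2 i with hf
  have hfc : Continuous f := by
    apply continuous_finset_sum
    intro i _
    exact ((continuous_apply i).comp continuous_fst).smul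
      ((continuous_apply i).comp continuous_snd)
  have hD : IsCompact ((stdSimplex ℝ (Fin (d+1))) ×ˢ (Set.univ.pi fun _ : Fin (d+1) => s)) :=
    (isCompact_stdSimplex _ _).prod (isCompact_univ_pi fun _ => hs)
  have him : convexHull ℝ s =
      f '' ((stdSimplex ℝ (Fin (d+1))) ×ˢ (Set.univ.pi fun _ : Fin (d+1) => s)) := by
    apply Subset.antisymm
    · intro x hx
      obtain ⟨ι, _hι, z, w, hzs, hai, hw0, hw1, hwz⟩ :=
        eq_pos_convex_span_of_mem_convexHull hx
      have hcard : Fintype.card ι ≤ d + 1 := by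
        refine hai.card_le_finrank_succ.trans ?_
        have h1 : Module.finrank ℝ (vectorSpan ℝ (Set.range z)) ≤
            Module.finrank ℝ (EuclideanSpace ℝ (Fin d)) := Submodule.finrank_le _
        have h2 : Module.finrank ℝ (EuclideanSpace ℝ (Fin d)) = d := finrank_euclideanSpace_fin
        omega
      obtain ⟨e⟩ : Nonempty (ι ↪ Fin (d+1)) :=
        Function.Embedding.nonempty_of_card_le (by simpa using hcard)
      set w' : Fin (d+1) → ℝ := Function.extend e w (fun _ => 0) with hw'
      set p : Fin (d+1) → EuclideanSpace ℝ (Fin d) := Function.extend e z (fun _ => s₀) with hp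
      have hwe : ∀ i, w' (e i) = w i := fun i => e.injective.extend_apply _ _ i
      have hpe : ∀ i, p (e i) = z i := fun i => e.injective.extend_apply _ _ i
      have hrange : ∀ j ∉ Set.range ⇑e, w' j = 0 := by
        intro j hj
        exact Function.extend_apply' _ _ _ (by simpa [Set.range] using hj)
      have hprange : ∀ j ∉ Set.range ⇑e, p j = s₀ := by
        intro j hj
        exact Function.extend_apply' _ _ _ (by simpa [Set.range] using hj)
      have hsum : ∀ (M : Type) [AddCommMonoid M], ∀ g : Fin (d+1) → M,
          (∀ j ∉ Set.range ⇑e, g j = 0) → ∑ j, g j = ∑ i, g (e i) := by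
        intro M _ g hg
        rw [← Finset.sum_subset (Finset.subset_univ (Finset.univ.map e))]
        · rw [Finset.sum_map]
        · intro j _ hj
          exact hg j (by simpa using hj)
      have hmem : (w', p) ∈ (stdSimplex ℝ (Fin (d+1))) ×ˢ (Set.univ.pi fun _ : Fin (d+1) => s) := by
        refine ⟨⟨?_, ?_⟩, ?_⟩
        · intro j
          show 0 ≤ w' j
          rcases em (j ∈ Set.range ⇑e) with ⟨i, rfl⟩ | hj
          · rw [hwe]; exact (hw0 i).le
          · rw [hrange j hj]
        · show ∑ j, w' j = 1
          rw [hsum ℝ w' hrange]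
          simp only [hwe]
          exact hw1
        · intro j _
          show p j ∈ s
          rcases em (j ∈ Set.range ⇑e) with ⟨i, rfl⟩ | hj
          · rw [hpe]; exact hzs ⟨i, rfl⟩
          · rw [hprange j hj]; exact hs₀
      refine ⟨(w', p), hmem, ?_⟩
      show ∑ j, w' j • p j = x
      rw [hsum _ (fun j => w' j • p j) (fun j hj => by show w' j • p j = 0; rw [hrange j hj, zero_smul])]
      simp only [hwe, hpe]
      exact hwz
    · rintro x ⟨⟨w, p⟩, ⟨⟨hw0, hw1⟩, hps⟩, rfl⟩
      exact (convex_convexHull ℝ s).sum_mem (fun i _ => hw0 i) hw1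
        (fun i _ => subset_convexHull ℝ s (hps i (Set.mem_univ i)))
  rw [him]
  exact hD.image hfc

lemma myHullEq {d : ℕ} {S : Set (EuclideanSpace ℝ (Fin d))} (hS : IsCompact S)
    (hcor : (S ∩ frontier (convexHull ℝ S)).Nonempty) :
    convexHull ℝ S = convexHull ℝ (S ∩ frontier (convexHull ℝ S)) := by
  set K := convexHull ℝ S with hK
  have hKc : IsCompact K := myIsCompact_convexHull hS
  have hKconv : Convex ℝ K := convex_convexHull ℝ S
  have hext : K.extremePoints ℝ ⊆ S ∩ frontier K := by
    intro x hx
    have hxS : x ∈ S := extremePoints_convexHull_subset hx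
    refine ⟨hxS, ?_⟩
    by_contra hxf
    have hxK : x ∈ K := subset_convexHull ℝ S hxS
    have hxint : x ∈ interior K := by
      rw [frontier, hKc.isClosed.closure_eq] at hxf
      by_contra h
      exact hxf ⟨hxK, h⟩
    obtain ⟨y, hyS, hyf⟩ := hcor
    have hyx : y ≠ x := by
      rintro rfl
      exact hyf.2 hxint
    set v := y - x with hv
    have hv0 : v ≠ 0 := sub_ne_zero.2 hyx
    obtain ⟨ε, hε, hball⟩ := Metric.isOpen_iff.1 isOpen_interior x hxint
    set δ : ℝ := ε / (2 * ‖v‖) with hδ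
    have hnv : 0 < ‖v‖ := norm_pos_iff.2 hv0
    have hδ0 : 0 < δ := div_pos hε (by positivity)
    have hdist : ‖δ • v‖ < ε := by
      rw [norm_smul, Real.norm_eq_abs, abs_of_pos hδ0, hδ]
      rw [div_mul_eq_mul_div, mul_comm]
      rw [div_lt_iff₀ (by positivity)]
      nlinarith
    have haK : x - δ • v ∈ K := interior_subset (hball (by
      simp [Metric.mem_ball, dist_eq_norm]
      simpa using hdist))
    have hbK : x + δ • v ∈ K := interior_subset (hball (by
      simp [Metric.mem_ball, dist_eq_norm]
      simpa using hdist))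
    have hseg : x ∈ openSegment ℝ (x - δ • v) (x + δ • v) := by
      refine ⟨1/2, 1/2, by norm_num, by norm_num, by norm_num, ?_⟩
      module
    have := hx.2 haK hbK hseg
    have : δ • v = 0 := sub_eq_self.1 this
    rcases smul_eq_zero.1 this with h | h
    · exact hδ0.ne' h
    · exact hv0 h
  have hKM : closure (convexHull ℝ (K.extremePoints ℝ)) = K :=
    closure_convexHull_extremePoints hKc hKconv
  apply Subset.antisymm
  · calc K = closure (convexHull ℝ (K.extremePoints ℝ)) := hKM.symm
      _ ⊆ closure (convexHull ℝ (S ∩ frontier K)) := closure_mono (convexHull_mono hext)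
      _ = convexHull ℝ (S ∩ frontier K) :=
        (myIsCompact_convexHull (hS.inter_right isClosed_frontier)).isClosed.closure_eq
  · exact convexHull_mono inter_subset_left

theorem stmt7 {d : ℕ} (𝕊 : Set (Set (EuclideanSpace ℝ (Fin d))))
    (h𝕊 : ∀ S ∈ 𝕊, S.Nonempty ∧ IsCompact S)
    (hcor : ∀ S ∈ 𝕊, (S ∩ frontier (convexHull ℝ S)).Nonempty)
    (Q : Set (EuclideanSpace ℝ (Fin d)))
    (ha : ∀ S ∈ 𝕊, gOp (S ∩ frontier (convexHull ℝ S)) Q ⊆ Q)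
    (hb : ∀ S ∈ 𝕊, ∀ c ∈ S \ frontier (convexHull ℝ S),
      (fun v => v - c) '' ((convexHull ℝ S + Q) ∩ vorCell S c) ⊆ Q) :
    GInvariantColl 𝕊 Q ∧
    ((0 : EuclideanSpace ℝ (Fin d)) ∈ Q → (⋃ n : ℕ, gIter 𝕊 {0} n) ⊆ Q) ∧
    ((0 : EuclideanSpace ℝ (Fin d)) ∈ Q → Bornology.IsBounded Q →
      Bornology.IsBounded (⋃ n : ℕ, gIter 𝕊 {0} n)) := by
  have key : GInvariantColl 𝕊 Q := by
    intro S hS x hx e he c hc hvor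
    obtain ⟨hSne, hScomp⟩ := h𝕊 S hS
    by_cases hcf : c ∈ frontier (convexHull ℝ S)
    · apply ha S hS
      refine Set.mem_biUnion (show c ∈ S ∩ frontier (convexHull ℝ S) from ⟨hc, hcf⟩) ?_
      refine ⟨e + x, ⟨?_, ?_⟩, rfl⟩
      · have hx' : x ∈ convexHull ℝ (S ∩ frontier (convexHull ℝ S)) := by
          rw [← myHullEq hScomp (hcor S hS)]; exact hx
        rw [add_comm e x]
        exact Set.add_mem_add hx' he
      · intro c' hc'
        exact hvor c' hc'.1
    · apply hb S hS c ⟨hc, hcf⟩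
      refine ⟨e + x, ⟨?_, hvor⟩, rfl⟩
      rw [add_comm e x]
      exact Set.add_mem_add hx he
  have step : ∀ A : Set (EuclideanSpace ℝ (Fin d)), A ⊆ Q → gOpColl 𝕊 A ⊆ Q := by
    intro A hA v hv
    simp only [gOpColl, Set.mem_iUnion] at hv
    obtain ⟨S, hS, hv⟩ := hv
    simp only [gOp, Set.mem_iUnion, Set.mem_image] at hv
    obtain ⟨c, hc, u, ⟨hu1, hu2⟩, rfl⟩ := hv
    rw [Set.mem_add] at hu1
    obtain ⟨y, hy, e, heA, rfl⟩ := hu1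
    have hq := key S hS y hy e (hA heA) c hc (by rwa [add_comm])
    rwa [add_comm y e]
  have hsub : (0 : EuclideanSpace ℝ (Fin d)) ∈ Q → (⋃ n : ℕ, gIter 𝕊 {0} n) ⊆ Q := by
    intro h0
    rw [Set.iUnion_subset_iff]
    intro n
    induction n with
    | zero => simpa [gIter] using Set.singleton_subset_iff.2 h0
    | succ n ih => exact step _ ih
  exact ⟨key, hsub, fun h0 hQb => hQb.subset (hsub h0)⟩
end
end

section
/- Let 𝕊 be a collection of nonempty compact subsets of E = EuclideanSpace ℝ (Fin d). Then the minimal G-invariant set with respect to 𝕊 containing the origin, namely 𝔤^∞_𝕊({0}) := ⋃_{n ≥ 0} 𝔤ⁿ_𝕊({0}), is star-convex with respect to the origin. -/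
open Set Pointwise

noncomputable section

lemma sc_key {d : ℕ} {u v : EuclideanSpace ℝ (Fin d)} {t : ℝ} (ht0 : 0 ≤ t) (ht1 : t ≤ 1)
    (h : ‖u‖ ≤ ‖u + v‖) : ‖t • u‖ ≤ ‖t • u + v‖ := by
  rw [← Real.sqrt_sq (norm_nonneg (t • u)), ← Real.sqrt_sq (norm_nonneg (t • u + v))]
  apply Real.sqrt_le_sqrt
  have h2 : ‖u‖ ^ 2 ≤ ‖u + v‖ ^ 2 := pow_le_pow_left₀ (norm_nonneg _) h 2
  have e1 : ‖u + v‖ ^ 2 = ‖u‖ ^ 2 + 2 * inner ℝ u v + ‖v‖ ^ 2 := norm_add_sq_real u v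
  have e2 : ‖t • u + v‖ ^ 2 = ‖t • u‖ ^ 2 + 2 * (t * inner ℝ u v) + ‖v‖ ^ 2 := by
    rw [norm_add_sq_real, real_inner_smul_left]
  have e3 : ‖t • u‖ ^ 2 = t ^ 2 * ‖u‖ ^ 2 := by
    rw [norm_smul, mul_pow]; simp [abs_of_nonneg ht0, sq_abs]
  have hv : (0:ℝ) ≤ ‖v‖ ^ 2 := by positivity
  nlinarith [h2, e1]

lemma vor_star {d : ℕ} {S : Set (EuclideanSpace ℝ (Fin d))} {c y : EuclideanSpace ℝ (Fin d)}
    (hy : y ∈ vorCell S c) {t : ℝ} (ht0 : 0 ≤ t) (ht1 : t ≤ 1) :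
    c + t • (y - c) ∈ vorCell S c := by
  intro c' hc'
  have h := hy c' hc'
  have e1 : c + t • (y - c) - c = t • (y - c) := by abel
  have e2 : c + t • (y - c) - c' = t • (y - c) + (c - c') := by abel
  have e3 : y - c' = (y - c) + (c - c') := by abel
  rw [e1, e2]
  exact sc_key ht0 ht1 (e3 ▸ h)

theorem stmt9 {d : ℕ} (𝕊 : Set (Set (EuclideanSpace ℝ (Fin d))))
    (h𝕊 : ∀ S ∈ 𝕊, S.Nonempty ∧ IsCompact S) :
    StarConvex ℝ 0 (⋃ n : ℕ, gIter 𝕊 {0} n) := by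
  set Q := ⋃ n : ℕ, gIter 𝕊 {0} n with hQ
  have key : ∀ n, ∀ a ∈ gIter 𝕊 {0} n, ∀ t : ℝ, 0 ≤ t → t ≤ 1 → t • a ∈ Q := by
    intro n
    induction n with
    | zero =>
      intro a ha t _ _
      simp only [gIter, mem_singleton_iff] at ha
      subst ha
      exact mem_iUnion.2 ⟨0, by simp [gIter]⟩
    | succ n ih =>
      intro e he t ht0 ht1
      simp only [gIter, gOpColl, gOp, mem_iUnion, mem_image, mem_inter_iff] at he
      obtain ⟨S, hS, c, hc, y, ⟨hySum, hyVor⟩, rfl⟩ := he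
      rw [Set.mem_add] at hySum
      obtain ⟨x, hx, a, ha, rfl⟩ := hySum
      obtain ⟨m, hm⟩ := mem_iUnion.1 (ih a ha t ht0 ht1)
      refine mem_iUnion.2 ⟨m + 1, ?_⟩
      simp only [gIter, gOpColl, gOp, mem_iUnion, mem_image, mem_inter_iff]
      refine ⟨S, hS, c, hc, c + t • (x + a - c), ⟨?_, vor_star hyVor ht0 ht1⟩, by abel⟩
      rw [Set.mem_add]
      refine ⟨(1 - t) • c + t • x, ?_, t • a, hm, by module⟩
      exact (convex_convexHull ℝ S) (subset_convexHull ℝ S hc) hx (by linarith) ht0 (by ring)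
  intro x hx t s ht hs hts
  obtain ⟨n, hn⟩ := mem_iUnion.1 hx
  have : t • (0 : EuclideanSpace ℝ (Fin d)) + s • x = s • x := by simp
  rw [this]
  exact key n x hn s hs (by linarith)
end
end

section
/- Let S be a nonempty compact subset of E = EuclideanSpace ℝ (Fin d), and let Q := 𝔤^∞_S({0}) be the minimal G-invariant set with respect to S containing the origin. Then for every y ∈ S that does not lie on the frontier of the convex hull of S (a ‘non-corner’ point of S), the translated Voronoi cell V_S(y) − y is contained in Q. -/
open Set Pointwise

noncomputable section

lemma vorCell_convex {d : ℕ} (S : Set (EuclideanSpace ℝ (Fin d)))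
    (c : EuclideanSpace ℝ (Fin d)) : Convex ℝ (vorCell S c) := by
  have h : vorCell S c = ⋂ c' ∈ S, {x : EuclideanSpace ℝ (Fin d) | ‖x - c‖ ≤ ‖x - c'‖} := by
    ext x; simp [vorCell]
  rw [h]
  refine convex_iInter fun c' => convex_iInter fun _ => ?_
  have h2 : {x : EuclideanSpace ℝ (Fin d) | ‖x - c‖ ≤ ‖x - c'‖}
      = {x : EuclideanSpace ℝ (Fin d) |
        (inner ℝ x (c' - c) : ℝ) * 2 ≤ ‖c'‖ ^ 2 - ‖c‖ ^ 2} := by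
    ext x
    simp only [mem_setOf_eq]
    rw [← pow_le_pow_iff_left₀ (norm_nonneg _) (norm_nonneg _) two_ne_zero,
      norm_sub_sq_real, norm_sub_sq_real, inner_sub_right]
    constructor <;> intro hle <;> linarith
  rw [h2]
  exact convex_halfSpace_le
    ⟨fun a b => by rw [inner_add_left, add_mul],
     fun r a => by rw [real_inner_smul_left, smul_eq_mul, mul_assoc]⟩ _

lemma mem_vorCell_self {d : ℕ} (S : Set (EuclideanSpace ℝ (Fin d)))
    (c : EuclideanSpace ℝ (Fin d)) : c ∈ vorCell S c := by
  intro c' _; simp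

theorem stmt10 {d : ℕ} (S : Set (EuclideanSpace ℝ (Fin d)))
    (hS : S.Nonempty) (hSc : IsCompact S) :
    ∀ y ∈ S, y ∉ frontier (convexHull ℝ S) →
      (fun v => v - y) '' vorCell S y ⊆ ⋃ n : ℕ, gIterS S {0} n := by
  intro y hyS hyf z hz
  obtain ⟨x, hx, rfl⟩ := hz
  -- y is in the interior of the hull
  have hycl : y ∈ closure (convexHull ℝ S) :=
    subset_closure (subset_convexHull ℝ S hyS)
  have hyint : y ∈ interior (convexHull ℝ S) := by
    by_contra h
    exact hyf ⟨hycl, h⟩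
  obtain ⟨ε, hε, hball⟩ := Metric.mem_nhds_iff.mp (mem_interior_iff_mem_nhds.mp hyint)
  -- choose n
  obtain ⟨n, hn⟩ := exists_nat_gt (‖x - y‖ / ε)
  have hn0 : 0 < (n : ℝ) := lt_of_le_of_lt (div_nonneg (norm_nonneg _) hε.le) hn
  have hnn : 0 < n := by exact_mod_cast hn0
  have hstep : ‖x - y‖ / n < ε := by
    rw [div_lt_iff₀ hn0, mul_comm]
    exact (div_lt_iff₀ hε).mp hn
  -- induction claim
  have key : ∀ k : ℕ, k ≤ n → ((k : ℝ) / n) • (x - y) ∈ gIterS S {0} k := by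
    intro k
    induction k with
    | zero => intro _; simp [gIterS]
    | succ k ih =>
      intro hk1
      have hk : k ≤ n := Nat.le_of_succ_le hk1
      have he := ih hk
      set t : ℝ := ((k : ℝ) + 1) / n with ht
      have ht1 : t ≤ 1 := by
        rw [ht, div_le_one hn0]
        exact_mod_cast hk1
      have ht0 : 0 ≤ t := by positivity
      set w : EuclideanSpace ℝ (Fin d) := y + t • (x - y) with hw
      have hwvor : w ∈ vorCell S y := by
        have := (vorCell_convex S y) (mem_vorCell_self S y) hx
          (a := 1 - t) (b := t) (by linarith) ht0 (by ring)
        have hwe : (1 - t) • y + t • x = w := by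
          rw [hw]; module
        rwa [hwe] at this
      set p : EuclideanSpace ℝ (Fin d) := y + ((1 : ℝ) / n) • (x - y) with hp
      have hphull : p ∈ convexHull ℝ S := by
        apply hball
        rw [Metric.mem_ball, hp, dist_eq_norm]
        have : y + (1 / (n : ℝ)) • (x - y) - y = (1 / (n : ℝ)) • (x - y) := by module
        rw [this, norm_smul]
        simpa [abs_of_pos (by positivity : (0:ℝ) < 1 / n), div_eq_mul_inv, mul_comm]
          using hstep
      have hsum : p + ((k : ℝ) / n) • (x - y) = w := by
        rw [hp, hw, ht]; field_simp; module
      have hwmem : w ∈ convexHull ℝ S + gIterS S {0} k := by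
        rw [← hsum]
        exact add_mem_add hphull he
      have : w - y ∈ gIterS S {0} (k + 1) := by
        show w - y ∈ gOp S (gIterS S {0} k)
        rw [gOp]
        refine mem_iUnion₂.mpr ⟨y, hyS, ⟨w, ⟨hwmem, hwvor⟩, rfl⟩⟩
      have hwy : w - y = (((k : ℝ) + 1) / n) • (x - y) := by
        rw [hw, ht]; module
      rw [hwy] at this
      convert this using 3
      push_cast
      ring
  have := key n le_rfl
  rw [div_self hn0.ne', one_smul] at this
  exact mem_iUnion.mpr ⟨n, this⟩
end
end

section
/- Let 𝕊 be a collection of nonempty compact subsets of E = EuclideanSpace ℝ (Fin d) with ⋂_{S ∈ 𝕊} S nonempty, let s₀ ∈ ⋂_{S ∈ 𝕊} S, and let D := ⋃_{S ∈ 𝕊} (convex hull of S). Then 𝔭_𝕊({s₀}) = D. Moreover, if D is F-invariant with respect to 𝕊, then D is the minimal F-invariant set with respect to 𝕊 containing s₀: every set D' that is F-invariant with respect to 𝕊 and contains s₀ satisfies D ⊆ D'. -/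
open Set Pointwise

noncomputable section

theorem stmt15 {d : ℕ} (𝕊 : Set (Set (EuclideanSpace ℝ (Fin d))))
    (h𝕊 : ∀ S ∈ 𝕊, S.Nonempty ∧ IsCompact S)
    (s₀ : EuclideanSpace ℝ (Fin d)) (hs₀ : ∀ S ∈ 𝕊, s₀ ∈ S) :
    pOpColl 𝕊 {s₀} = (⋃ S ∈ 𝕊, convexHull ℝ S) ∧
    (FInvariantColl 𝕊 (⋃ S ∈ 𝕊, convexHull ℝ S) →
      ∀ D' : Set (EuclideanSpace ℝ (Fin d)), FInvariantColl 𝕊 D' → s₀ ∈ D' →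
        (⋃ S ∈ 𝕊, convexHull ℝ S) ⊆ D') := by
  have hvor : ∀ S : Set (EuclideanSpace ℝ (Fin d)), s₀ ∈ vorCell S s₀ := by
    intro S c' _
    simp
  have key : ∀ S ∈ 𝕊, pOp S {s₀} = convexHull ℝ S := by
    intro S hS
    apply Set.Subset.antisymm
    · rintro y hy
      obtain ⟨a, ha, b, hb, rfl⟩ := hy
      simp only [mem_iUnion] at hb
      obtain ⟨c, hc, v, ⟨hv1, hv2⟩, rfl⟩ := hb
      rcases hv1 with rfl
      have hc0 : v = c := by
        have h1 := hv2 _ (hs₀ S hS)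
        simp only [sub_self, norm_zero] at h1
        have : v - c = 0 := norm_le_zero_iff.1 h1
        exact sub_eq_zero.1 this
      simpa [hc0] using ha
    · intro x hx
      exact ⟨x, hx, 0, by
        refine mem_iUnion.2 ⟨s₀, mem_iUnion.2 ⟨hs₀ S hS, ⟨s₀, ⟨rfl, hvor S⟩, by simp⟩⟩⟩,
        by simp⟩
  constructor
  · ext y
    simp only [pOpColl, mem_iUnion]
    constructor
    · rintro ⟨S, hS, hy⟩
      exact ⟨S, hS, (key S hS) ▸ hy⟩
    · rintro ⟨S, hS, hy⟩
      exact ⟨S, hS, (key S hS).symm ▸ hy⟩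
  · intro _ D' hD' hs₀D'
    intro z hz
    simp only [mem_iUnion] at hz
    obtain ⟨S, hS, hz⟩ := hz
    have := hD' S hS s₀ hs₀D' s₀ (hs₀ S hS) (hvor S) z hz
    simpa using this
end
end

section
/- Work in E = EuclideanSpace ℝ (Fin 2) with coordinates (v 0, v 1). Fix φ ∈ (0, π/2) and h_max ≥ 0, and for h ∈ [0, h_max] let T(h) := {v ∈ E : 0 ≤ v 1 ∧ v 1 ≤ h ∧ |v 0| ≤ (v 1) · tan φ}, and let 𝕊 := {T(h) : h ∈ [0, h_max]}. Then T(h_max) is F-invariant with respect to 𝕊, and it is the minimal F-invariant set with respect to 𝕊 containing the origin: every set D' that is F-invariant with respect to 𝕊 and contains 0 satisfies T(h_max) ⊆ D'. -/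
open Set Pointwise

noncomputable section

lemma convexT' (t h : ℝ) :
    Convex ℝ {v : EuclideanSpace ℝ (Fin 2) | 0 ≤ v 1 ∧ v 1 ≤ h ∧ |v 0| ≤ v 1 * t} := by
  intro u hu w hw a b ha hb hab
  obtain ⟨hu1, hu2, hu3⟩ := hu
  obtain ⟨hw1, hw2, hw3⟩ := hw
  have e0 : (a • u + b • w) 0 = a * u 0 + b * w 0 := rfl
  have e1 : (a • u + b • w) 1 = a * u 1 + b * w 1 := rfl
  refine ⟨?_, ?_, ?_⟩
  · rw [e1]; exact add_nonneg (mul_nonneg ha hu1) (mul_nonneg hb hw1)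
  · rw [e1]; nlinarith
  · rw [e0, e1]
    calc |a * u 0 + b * w 0| ≤ |a * u 0| + |b * w 0| := abs_add_le _ _
      _ = a * |u 0| + b * |w 0| := by rw [abs_mul, abs_mul, abs_of_nonneg ha, abs_of_nonneg hb]
      _ ≤ a * (u 1 * t) + b * (w 1 * t) :=
          add_le_add (mul_le_mul_of_nonneg_left hu3 ha) (mul_le_mul_of_nonneg_left hw3 hb)
      _ = (a * u 1 + b * w 1) * t := by ring

lemma proj_inner' {K : Set (EuclideanSpace ℝ (Fin 2))} (hK : Convex ℝ K)
    {z c : EuclideanSpace ℝ (Fin 2)} (hc : c ∈ K)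
    (hz : ∀ w ∈ K, ‖z - c‖ ≤ ‖z - w‖) :
    ∀ w ∈ K, (inner ℝ (z - c) (w - c) : ℝ) ≤ 0 := by
  haveI : Nonempty K := ⟨⟨c, hc⟩⟩
  have heq : ‖z - c‖ = ⨅ w : K, ‖z - (w : EuclideanSpace ℝ (Fin 2))‖ := by
    apply le_antisymm
    · exact le_ciInf fun w => hz w w.2
    · exact ciInf_le ⟨0, by rintro _ ⟨w, rfl⟩; exact norm_nonneg _⟩ (⟨c, hc⟩ : K)
  exact (norm_eq_iInf_iff_real_inner_le_zero hK hc).1 heq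

lemma inner2' (u v : EuclideanSpace ℝ (Fin 2)) : (inner ℝ u v : ℝ) = u 0 * v 0 + u 1 * v 1 := by
  simp [PiLp.inner_apply, Fin.sum_univ_two, mul_comm]

set_option maxHeartbeats 2000000

theorem stmt17 (φ : ℝ) (hφ : φ ∈ Set.Ioo 0 (Real.pi / 2))
    (hmax : ℝ) (hh : 0 ≤ hmax)
    (T : ℝ → Set (EuclideanSpace ℝ (Fin 2)))
    (hT : ∀ h : ℝ, T h = {v : EuclideanSpace ℝ (Fin 2) |
      0 ≤ v 1 ∧ v 1 ≤ h ∧ |v 0| ≤ v 1 * Real.tan φ})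
    (𝕊 : Set (Set (EuclideanSpace ℝ (Fin 2))))
    (h𝕊 : 𝕊 = (fun h => T h) '' Set.Icc 0 hmax) :
    FInvariantColl 𝕊 (T hmax) ∧
    (∀ D' : Set (EuclideanSpace ℝ (Fin 2)), FInvariantColl 𝕊 D' →
      (0 : EuclideanSpace ℝ (Fin 2)) ∈ D' → T hmax ⊆ D') := by
  set t := Real.tan φ with htdef
  have ht0 : 0 < t := Real.tan_pos_of_pos_of_lt_pi_div_two hφ.1 hφ.2
  constructor
  · -- F-invariance of T hmax
    intro S hS
    rw [h𝕊] at hS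
    obtain ⟨h, hhmem, rfl⟩ := hS
    obtain ⟨hh0, hhm⟩ := hhmem
    intro z hz c hc hzc x hx
    dsimp only at hc hzc hx ⊢
    rw [hT] at hz hc ⊢
    have hconv : Convex ℝ (T h) := by rw [hT]; exact convexT' t h
    have hxT : x ∈ T h := hconv.convexHull_eq ▸ hx
    rw [hT] at hxT
    obtain ⟨hx1, hx2, hx3⟩ := hxT
    obtain ⟨hz1, hz2, hz3⟩ := hz
    obtain ⟨hc1, hc2, hc3⟩ := hc
    have hinner : ∀ w ∈ T h, (inner ℝ (z - c) (w - c) : ℝ) ≤ 0 := by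
      apply proj_inner' hconv (by rw [hT]; exact ⟨hc1, hc2, hc3⟩)
      intro w hw; exact hzc w hw
    have hinner' : ∀ w ∈ T h,
        (z 0 - c 0) * (w 0 - c 0) + (z 1 - c 1) * (w 1 - c 1) ≤ 0 := by
      intro w hw
      have := hinner w hw
      rw [inner2'] at this
      exact this
    have hz3' := abs_le.1 hz3
    have hc3' := abs_le.1 hc3
    have hx3' := abs_le.1 hx3
    by_cases hzh : z 1 ≤ h
    · -- z ∈ T h, so c = z
      have hzT : z ∈ T h := by rw [hT]; exact ⟨hz1, hzh, hz3⟩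
      have hself := hinner z hzT
      have hzc0 : z - c = 0 := real_inner_self_nonpos.1 hself
      obtain rfl : z = c := sub_eq_zero.1 hzc0
      have hzz : z + x - z = x := by abel
      rw [hzz]
      exact ⟨hx1, hx2.trans hhm, hx3⟩
    · push_neg at hzh
      -- first: c 1 = h
      have hwtop : (!₂[c 0, h] : EuclideanSpace ℝ (Fin 2)) ∈ T h := by
        rw [hT]
        refine ⟨hh0, le_refl h, ?_⟩
        show |c 0| ≤ h * t
        nlinarith [hc3'.1, hc3'.2, abs_nonneg (c 0)]
      have etop : (z 0 - c 0) * (c 0 - c 0) + (z 1 - c 1) * (h - c 1) ≤ 0 :=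
        hinner' _ hwtop
      have c1h : c 1 = h := le_antisymm hc2 (by nlinarith)
      have hg0 : (z + x - c) 0 = z 0 + x 0 - c 0 := rfl
      have hg1 : (z + x - c) 1 = z 1 + x 1 - c 1 := rfl
      refine ⟨?_, ?_, ?_⟩
      · rw [hg1]; linarith
      · rw [hg1]; linarith
      · rw [hg0, hg1, abs_le]
        constructor
        · -- lower bound: -((z1+x1-c1)*t) ≤ z0+x0-c0
          rcases le_or_gt (c 0) (z 0) with hle | hlt
          · have hp : 0 ≤ (z 1 - h) * t := mul_nonneg (by linarith) ht0.le
            nlinarith [hx3'.1]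
          · -- use corner (-h*t, h)
            have hwl : (!₂[-(h * t), h] : EuclideanSpace ℝ (Fin 2)) ∈ T h := by
              rw [hT]
              refine ⟨hh0, le_refl h, ?_⟩
              show |(-(h * t))| ≤ h * t
              rw [abs_neg, abs_of_nonneg (by positivity)]
            have el : (z 0 - c 0) * (-(h * t) - c 0) + (z 1 - c 1) * (h - c 1) ≤ 0 :=
              hinner' _ hwl
            have hc0 : c 0 ≤ -(h * t) := by nlinarith [el, c1h]
            have hexp : (z 1 + x 1 - c 1) * t = z 1 * t + x 1 * t - h * t := by
              rw [c1h]; ring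
            have hc0' : c 0 = -(h * t) := le_antisymm hc0 (by nlinarith [hc3'.1, c1h])
            rw [hexp, hc0']
            linarith [hz3'.1, hx3'.1]
        · -- upper bound
          rcases le_or_gt (z 0) (c 0) with hle | hlt
          · have hp : 0 ≤ (z 1 - h) * t := mul_nonneg (by linarith) ht0.le
            nlinarith [hx3'.2]
          · have hwr : (!₂[h * t, h] : EuclideanSpace ℝ (Fin 2)) ∈ T h := by
              rw [hT]
              refine ⟨hh0, le_refl h, ?_⟩
              show |h * t| ≤ h * t
              rw [abs_of_nonneg (by positivity)]
            have er : (z 0 - c 0) * (h * t - c 0) + (z 1 - c 1) * (h - c 1) ≤ 0 :=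
              hinner' _ hwr
            have hc0 : h * t ≤ c 0 := by nlinarith [er, c1h]
            have hc0' : c 0 = h * t := le_antisymm (by nlinarith [hc3'.2, c1h]) hc0
            have hexp : (z 1 + x 1 - c 1) * t = z 1 * t + x 1 * t - h * t := by
              rw [c1h]; ring
            rw [hexp, hc0']
            linarith [hz3'.2, hx3'.2]
  · -- minimality
    intro D' hD' hD0 v hv
    rw [hT] at hv
    obtain ⟨hv1, hv2, hv3⟩ := hv
    have hS : T (v 1) ∈ 𝕊 := by rw [h𝕊]; exact ⟨v 1, ⟨hv1, hv2⟩, rfl⟩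
    have h0T : (0 : EuclideanSpace ℝ (Fin 2)) ∈ T (v 1) := by
      rw [hT]
      refine ⟨le_refl 0, hv1, ?_⟩
      show |(0:ℝ)| ≤ (0:ℝ) * t
      simp
    have hvor : (0 : EuclideanSpace ℝ (Fin 2)) ∈ vorCell (T (v 1)) 0 := by
      intro c' _; simp
    have hvhull : v ∈ convexHull ℝ (T (v 1)) := by
      apply subset_convexHull
      rw [hT]; exact ⟨hv1, le_refl _, hv3⟩
    have := hD' _ hS 0 hD0 0 h0T hvor v hvhull
    simpa using this
end
end
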